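/- If q : ℝ → ℍ is differentiable and q(t) commutes with q'(t) for all t, then the function t ↦ e^{q(t)} is differentiable and its derivative equals e^{q(t)} · q'(t). -/

import Mathlib

open scoped Quaternion
open NormedSpace Nat

noncomputable abbrev quatModuleNormed : Module ℝ ℍ[ℝ] := NormedSpace.toModule

section
attribute [local instance] quatModuleNormed

/-- The Fréchet derivative of `x ↦ x ^ n` on the quaternions. -/
noncomputable def quatPowDeriv : ℕ → ℍ[ℝ] → (ℍ[ℝ] →L[ℝ] ℍ[ℝ])
  | 0, _ => 0
  | n + 1, x => ContinuousLinearMap.mul ℝ ℍ[ℝ] (x ^ n) + (quatPowDeriv n x).smulRight x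

lemma quatPowDeriv_succ_apply (n : ℕ) (x h : ℍ[ℝ]) :
    quatPowDeriv (n + 1) x h = x ^ n * h + quatPowDeriv n x h * x := rfl

lemma hasFDerivAt_quatPow (n : ℕ) (x : ℍ[ℝ]) :
    HasFDerivAt (fun y : ℍ[ℝ] => y ^ n) (quatPowDeriv n x) x := by
  induction n with
  | zero => simpa [quatPowDeriv] using hasFDerivAt_const (1 : ℍ[ℝ]) x
  | succ n ih =>
    have h := ih.mul' (hasFDerivAt_id x)
    simp only [pow_succ]
    exact h.congr_fderiv (ContinuousLinearMap.ext fun h' => by rw [quatPowDeriv_succ_apply]; rfl)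

lemma quatPowDeriv_norm_le (n : ℕ) (x : ℍ[ℝ]) :
    ‖quatPowDeriv n x‖ ≤ n * ‖x‖ ^ (n - 1) := by
  induction n with
  | zero => simp [quatPowDeriv]
  | succ n ih =>
    refine ContinuousLinearMap.opNorm_le_bound _ (by positivity) fun h => ?_
    rw [quatPowDeriv_succ_apply]
    have h1 : ‖x ^ n * h + quatPowDeriv n x h * x‖ ≤
        ‖x ^ n * h‖ + ‖quatPowDeriv n x h * x‖ := norm_add_le _ _
    have h2 : ‖x ^ n * h‖ ≤ ‖x‖ ^ n * ‖h‖ := by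
      calc ‖x ^ n * h‖ ≤ ‖x ^ n‖ * ‖h‖ := norm_mul_le _ _
      _ ≤ ‖x‖ ^ n * ‖h‖ := by rw [norm_pow]
    have h3 : ‖quatPowDeriv n x h * x‖ ≤ (n * ‖x‖ ^ (n - 1)) * ‖x‖ * ‖h‖ := by
      calc ‖quatPowDeriv n x h * x‖ ≤ ‖quatPowDeriv n x h‖ * ‖x‖ := norm_mul_le _ _
      _ ≤ (‖quatPowDeriv n x‖ * ‖h‖) * ‖x‖ := by
          have := ContinuousLinearMap.le_opNorm (quatPowDeriv n x) h
          gcongr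
      _ ≤ ((n * ‖x‖ ^ (n - 1)) * ‖h‖) * ‖x‖ := by gcongr
      _ = (n * ‖x‖ ^ (n - 1)) * ‖x‖ * ‖h‖ := by ring
    have h4 : (n : ℝ) * ‖x‖ ^ (n - 1) * ‖x‖ ≤ n * ‖x‖ ^ n := by
      rcases Nat.eq_zero_or_pos n with hn | hn
      · simp [hn]
      · have : ‖x‖ ^ (n - 1) * ‖x‖ = ‖x‖ ^ n := by
          rw [← pow_succ, Nat.sub_add_cancel hn]
        rw [mul_assoc, this]
    calc ‖x ^ n * h + quatPowDeriv n x h * x‖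
        ≤ ‖x‖ ^ n * ‖h‖ + (n * ‖x‖ ^ (n - 1)) * ‖x‖ * ‖h‖ := by
          exact h1.trans (add_le_add h2 h3)
      _ ≤ ‖x‖ ^ n * ‖h‖ + (n * ‖x‖ ^ n) * ‖h‖ := by gcongr
      _ = ((n + 1 : ℕ) : ℝ) * ‖x‖ ^ ((n + 1) - 1) * ‖h‖ := by push_cast; ring

lemma quatPowDeriv_apply_of_commute (x h : ℍ[ℝ]) (hx : h * x = x * h) (n : ℕ) :
    quatPowDeriv (n + 1) x h = (n + 1 : ℕ) • (x ^ n * h) := by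
  induction n with
  | zero => simp [quatPowDeriv_succ_apply, quatPowDeriv]
  | succ n ih =>
    rw [quatPowDeriv_succ_apply, ih]
    have key : x ^ n * h * x = x ^ (n + 1) * h := by
      rw [mul_assoc, hx, ← mul_assoc, ← pow_succ]
    rw [smul_mul_assoc, key, succ_nsmul _ (n + 1), add_comm]

/-- The bound sequence. -/
noncomputable def quatExpBound (r : ℝ) : ℕ → ℝ
  | 0 => 0
  | n + 1 => r ^ n / n !

lemma summable_quatExpBound (r : ℝ) : Summable (quatExpBound r) := by
  rw [← summable_nat_add_iff 1]
  exact (Real.summable_pow_div_factorial r).congr fun n => by simp [quatExpBound]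

lemma quatExp_fderiv_norm_le {r : ℝ} (n : ℕ) (x : ℍ[ℝ]) (hx : ‖x‖ ≤ r) (hr : 0 ≤ r) :
    ‖(n ! : ℝ)⁻¹ • quatPowDeriv n x‖ ≤ quatExpBound r n := by
  cases n with
  | zero => simp [quatPowDeriv, quatExpBound]
  | succ n =>
    have h1 : ‖quatPowDeriv (n + 1) x‖ ≤ (n + 1) * r ^ n := by
      refine (quatPowDeriv_norm_le (n + 1) x).trans ?_
      simp only [Nat.add_sub_cancel]
      gcongr
      exact_mod_cast le_refl _
    refine (_root_.norm_smul_le (((n + 1)! : ℝ))⁻¹ (quatPowDeriv (n + 1) x)).trans ?_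
    calc ‖((n + 1)! : ℝ)⁻¹‖ * ‖quatPowDeriv (n + 1) x‖
        ≤ ((n + 1)! : ℝ)⁻¹ * ((n + 1) * r ^ n) := by
          rw [Real.norm_eq_abs, abs_of_nonneg (by positivity)]
          gcongr
      _ = quatExpBound r (n + 1) := by
          rw [quatExpBound, Nat.factorial_succ]
          push_cast
          rw [mul_inv]
          have hfac : ((n : ℝ) + 1) ≠ 0 := by positivity
          field_simp

lemma summable_quatExp_fderiv (x : ℍ[ℝ]) :
    Summable (fun n => (n ! : ℝ)⁻¹ • quatPowDeriv n x) := by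
  refine Summable.of_norm_bounded (summable_quatExpBound ‖x‖) fun n => ?_
  exact quatExp_fderiv_norm_le n x le_rfl (norm_nonneg x)

lemma hasFDerivAt_quatExp (x : ℍ[ℝ]) :
    HasFDerivAt (NormedSpace.exp) (∑' n, (n ! : ℝ)⁻¹ • quatPowDeriv n x) x := by
  set r : ℝ := ‖x‖ + 1 with hr
  have hr0 : 0 ≤ r := by positivity
  have key : HasFDerivAt (fun y : ℍ[ℝ] => ∑' n, (n ! : ℝ)⁻¹ • y ^ n)
      (∑' n, (n ! : ℝ)⁻¹ • quatPowDeriv n x) x := by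
    refine hasFDerivAt_tsum_of_isPreconnected (summable_quatExpBound r)
      (Metric.isOpen_ball) ((convex_ball (0 : ℍ[ℝ]) r).isPreconnected)
      (fun n y _ => (hasFDerivAt_quatPow n y).const_smul ((n ! : ℝ)⁻¹))
      (fun n y hy => ?_) (x₀ := 0) ?_ ?_ ?_
    · rw [mem_ball_zero_iff] at hy
      exact quatExp_fderiv_norm_le n y hy.le hr0
    · simp [Metric.mem_ball, hr, norm_nonneg x]
      linarith [norm_nonneg x]
    · refine summable_of_ne_finset_zero (s := {0}) fun n hn => ?_
      simp only [Finset.mem_singleton] at hn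
      rw [Pi.smul_apply, zero_pow hn, smul_zero]
    · simp [Metric.mem_ball, hr]
  have heq : NormedSpace.exp = (fun y : ℍ[ℝ] => ∑' n, (n ! : ℝ)⁻¹ • y ^ n) :=
    exp_eq_tsum (𝕂 := ℝ) (𝔸 := ℍ[ℝ])
  rw [heq]
  exact key

set_option maxHeartbeats 1000000 in
lemma quatExp_fderiv_apply_of_commute (x h : ℍ[ℝ]) (hx : h * x = x * h) :
    (∑' n, (n ! : ℝ)⁻¹ • quatPowDeriv n x) h = NormedSpace.exp x * h := by
  have hsum := summable_quatExp_fderiv x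
  have happ : (∑' n, (n ! : ℝ)⁻¹ • quatPowDeriv n x) h
      = ∑' n, ((n ! : ℝ)⁻¹ • quatPowDeriv n x) h := by
    exact ((ContinuousLinearMap.apply ℝ ℍ[ℝ] h).map_tsum hsum)
  rw [happ]
  have hsum2 : Summable (fun n => ((n ! : ℝ)⁻¹ • quatPowDeriv n x) h) :=
    hsum.map (ContinuousLinearMap.apply ℝ ℍ[ℝ] h)
      ((ContinuousLinearMap.apply ℝ ℍ[ℝ] h).continuous)
  rw [Summable.tsum_eq_zero_add hsum2]
  have h0 : ((0! : ℝ)⁻¹ • quatPowDeriv 0 x) h = 0 := by simp [quatPowDeriv]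
  rw [h0, zero_add]
  have hterm : ∀ n : ℕ, (((n + 1)! : ℝ)⁻¹ • quatPowDeriv (n + 1) x) h
      = ((n ! : ℝ)⁻¹ • x ^ n) * h := by
    intro n
    rw [ContinuousLinearMap.smul_apply, quatPowDeriv_apply_of_commute x h hx n,
      ← Nat.cast_smul_eq_nsmul ℝ, smul_smul, smul_mul_assoc]
    congr 1
    rw [Nat.factorial_succ]
    push_cast
    have : ((n : ℝ) + 1) ≠ 0 := by positivity
    field_simp
  simp only [hterm]
  rw [tsum_mul_right, exp_eq_tsum (𝕂 := ℝ)]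

end

/-- If `q : ℝ → ℍ` is differentiable and `q(t)` commutes with `q'(t)` for all `t`, then
`t ↦ e^{q(t)}` is differentiable with derivative `e^{q(t)} * q'(t)`. -/
theorem quaternion_deriv_exp_of_commute (q : ℝ → ℍ[ℝ]) (hq : Differentiable ℝ q)
    (hc : ∀ t : ℝ, q t * deriv q t = deriv q t * q t) :
    Differentiable ℝ (fun t => NormedSpace.exp (q t)) ∧
      ∀ t : ℝ, deriv (fun t => NormedSpace.exp (q t)) t = NormedSpace.exp (q t) * deriv q t := by
  have key : ∀ t : ℝ, HasDerivAt (fun t => NormedSpace.exp (q t)) (NormedSpace.exp (q t) * deriv q t) t := by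
    intro t
    have h1 := (hasFDerivAt_quatExp (q t)).comp_hasDerivAt t (hq t).hasDerivAt
    rwa [quatExp_fderiv_apply_of_commute (q t) (deriv q t) (hc t).symm] at h1
  exact ⟨fun t => (key t).differentiableAt, fun t => (key t).deriv⟩
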